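/- In the setting of the previous statement, π* is optimal among valid p-values in the following sense: if π : X → [0,1] satisfies P(π(X) ≤ α) ≤ α (X ~ P) for all α ∈ (0,1), then for every α ∈ (0,1), Q(π*(X) > α) ≤ Q(π(X) > α), where now X ~ Q. Equivalently, the test x ↦ 1{π*(x) ≤ α} maximizes power against Q among level-α tests of P. -/

import Mathlib

open MeasureTheory
open scoped ENNReal

/-- the oracle p-value `π*` is optimal among valid p-values:
it minimizes `Q(π(X) > α)` for every level `α`. -/
theorem stmt2 {𝓧 : Type*} [MeasurableSpace 𝓧]
    (M : Measure 𝓧) (f g : 𝓧 → ℝ)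
    (hfpos : ∀ x, 0 < f x) (hgpos : ∀ x, 0 < g x)
    (hfm : Measurable f) (hgm : Measurable g)
    (P Q : Measure 𝓧)
    (hP : P = M.withDensity fun x => ENNReal.ofReal (f x))
    (hQ : Q = M.withDensity fun x => ENNReal.ofReal (g x))
    [IsProbabilityMeasure P] [IsProbabilityMeasure Q]
    (T : 𝓧 → ℝ) (hT : ∀ x, T x = g x / f x)
    (hcont : ∀ c : ℝ, P {x | T x = c} = 0)
    (πstar : 𝓧 → ℝ) (hπstar : ∀ x, πstar x = (P {z | T x ≤ T z}).toReal)
    (π : 𝓧 → ℝ) (hπm : Measurable π)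
    (hπrange : ∀ x, π x ∈ Set.Icc (0:ℝ) 1)
    (hπvalid : ∀ α ∈ Set.Ioo (0:ℝ) 1, (P {x | π x ≤ α}).toReal ≤ α) :
    ∀ α ∈ Set.Ioo (0:ℝ) 1,
      (Q {x | α < πstar x}).toReal ≤ (Q {x | α < π x}).toReal := by
  intro α hα
  obtain ⟨hα0, hα1⟩ := hα
  have hTm : Measurable T := by
    have hTe : T = fun x => g x / f x := funext hT
    rw [hTe]; exact hgm.div hfm
  have hFm : ∀ t : ℝ, MeasurableSet {z | t ≤ T z} := fun t =>
    measurableSet_le measurable_const hTm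
  have hFanti : ∀ s t : ℝ, s ≤ t → P {z | t ≤ T z} ≤ P {z | s ≤ T z} :=
    fun s t h => measure_mono fun z hz => le_trans h hz
  have hαpos : (0 : ℝ≥0∞) < ENNReal.ofReal α := ENNReal.ofReal_pos.mpr hα0
  have hαlt1 : ENNReal.ofReal α < 1 := by
    rw [show (1 : ℝ≥0∞) = ENNReal.ofReal 1 by simp]
    exact (ENNReal.ofReal_lt_ofReal_iff one_pos).mpr hα1
  set S : Set ℝ := {t | P {z | t ≤ T z} ≤ ENNReal.ofReal α} with hSdef
  -- S is upward closed
  have hSup : ∀ t ∈ S, ∀ t', t ≤ t' → t' ∈ S := fun t ht t' h =>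
    le_trans (hFanti t t' h) ht
  -- S is nonempty
  have hSne : S.Nonempty := by
    by_contra h
    have hall : ∀ t : ℝ, ENNReal.ofReal α < P {z | t ≤ T z} := by
      intro t
      by_contra h'
      exact h ⟨t, not_lt.mp h'⟩
    have hanti : Antitone (fun n : ℕ => {z | (n : ℝ) ≤ T z}) := by
      intro n m hnm z hz
      simp only [Set.mem_setOf_eq] at hz ⊢
      exact le_trans (by exact_mod_cast hnm : (n:ℝ) ≤ m) hz
    have hiInter : (⋂ n : ℕ, {z | (n : ℝ) ≤ T z}) = ∅ := by
      ext z
      simp only [Set.mem_iInter, Set.mem_setOf_eq, Set.mem_empty_iff_false, iff_false, not_forall,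
        not_le]
      obtain ⟨n, hn⟩ := exists_nat_gt (T z)
      exact ⟨n, hn⟩
    have := hanti.measure_iInter (μ := P) (fun n => (hFm _).nullMeasurableSet)
      ⟨0, measure_ne_top _ _⟩
    rw [hiInter, measure_empty] at this
    have : (0 : ℝ≥0∞) ≥ ENNReal.ofReal α := by
      rw [this]
      exact le_iInf fun n => (hall n).le
    exact absurd (lt_of_lt_of_le hαpos this) (lt_irrefl _)
  -- S is bounded below by 0
  have hSpos : ∀ t ∈ S, 0 < t := by
    intro t ht
    by_contra h
    push_neg at h
    have : {z | t ≤ T z} = Set.univ := by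
      ext z
      simp only [Set.mem_setOf_eq, Set.mem_univ, iff_true]
      have : 0 < T z := by rw [hT z]; exact div_pos (hgpos z) (hfpos z)
      linarith
    rw [hSdef] at ht
    simp only [Set.mem_setOf_eq, this, measure_univ] at ht
    exact absurd (lt_of_le_of_lt ht hαlt1) (lt_irrefl _)
  have hSbdd : BddBelow S := ⟨0, fun t ht => (hSpos t ht).le⟩
  set c : ℝ := sInf S with hcdef
  have hc0 : 0 ≤ c := le_csInf hSne fun t ht => (hSpos t ht).le
  have hmemS : ∀ t, c < t → t ∈ S := by
    intro t ht
    obtain ⟨s, hs, hst⟩ := (csInf_lt_iff hSbdd hSne).mp ht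
    exact hSup s hs t hst.le
  have hnotS : ∀ t, t < c → ENNReal.ofReal α < P {z | t ≤ T z} := by
    intro t ht
    by_contra h'
    exact absurd (csInf_le hSbdd (not_lt.mp h' : t ∈ S)) (not_le.mpr ht)
  -- the set A' = {T ≥ c}
  set A : Set 𝓧 := {x | c ≤ T x} with hAdef
  have hAm : MeasurableSet A := measurableSet_le measurable_const hTm
  -- P A ≥ α  (left continuity)
  have hPA_ge : ENNReal.ofReal α ≤ P A := by
    have hinter : A = ⋂ n : ℕ, {z | c - 1 / (n + 1) ≤ T z} := by
      ext z
      simp only [hAdef, Set.mem_iInter, Set.mem_setOf_eq]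
      constructor
      · intro h n
        have : (0:ℝ) < 1 / (n + 1) := by positivity
        linarith
      · intro h
        by_contra h'
        push_neg at h'
        obtain ⟨n, hn⟩ := exists_nat_one_div_lt (show (0:ℝ) < c - T z by linarith)
        have := h n
        linarith
    have hanti : Antitone (fun n : ℕ => {z | c - 1 / ((n:ℝ) + 1) ≤ T z}) := by
      intro n m hnm z hz
      simp only [Set.mem_setOf_eq] at hz ⊢
      have h1 : (1:ℝ) / (m + 1) ≤ 1 / (n + 1) := by
        apply one_div_le_one_div_of_le (by positivity)
        exact_mod_cast by omega
      linarith
    rw [hinter, hanti.measure_iInter (fun n => (hFm _).nullMeasurableSet)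
      ⟨0, measure_ne_top _ _⟩]
    refine le_iInf fun n => ?_
    refine (hnotS (c - 1 / (n + 1)) ?_).le
    have : (0:ℝ) < 1 / ((n:ℝ) + 1) := by positivity
    linarith
  -- P A ≤ α  (right continuity, using the continuity of the law of T)
  have hPA_le : P A ≤ ENNReal.ofReal α := by
    have hsub : A ⊆ {z | c < T z} ∪ {z | T z = c} := by
      intro z hz
      rcases lt_or_eq_of_le (show c ≤ T z from hz) with h | h
      · exact Or.inl h
      · exact Or.inr h.symm
    have hUnion : {z | c < T z} = ⋃ n : ℕ, {z | c + 1 / ((n:ℝ) + 1) ≤ T z} := by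
      ext z
      simp only [Set.mem_iUnion, Set.mem_setOf_eq]
      constructor
      · intro h
        obtain ⟨n, hn⟩ := exists_nat_one_div_lt (show (0:ℝ) < T z - c by linarith)
        exact ⟨n, by linarith⟩
      · rintro ⟨n, hn⟩
        have : (0:ℝ) < 1 / ((n:ℝ) + 1) := by positivity
        linarith
    have hmono : Monotone (fun n : ℕ => {z | c + 1 / ((n:ℝ) + 1) ≤ T z}) := by
      intro n m hnm z hz
      simp only [Set.mem_setOf_eq] at hz ⊢
      have h1 : (1:ℝ) / (m + 1) ≤ 1 / (n + 1) := by
        apply one_div_le_one_div_of_le (by positivity)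
        exact_mod_cast by omega
      linarith
    have hlt : P {z | c < T z} ≤ ENNReal.ofReal α := by
      rw [hUnion, hmono.measure_iUnion]
      refine iSup_le fun n => ?_
      refine hmemS (c + 1 / ((n:ℝ) + 1)) ?_
      have : (0:ℝ) < 1 / ((n:ℝ) + 1) := by positivity
      linarith
    calc P A ≤ P ({z | c < T z} ∪ {z | T z = c}) := measure_mono hsub
      _ ≤ P {z | c < T z} + P {z | T z = c} := measure_union_le _ _
      _ = P {z | c < T z} + 0 := by rw [hcont c]
      _ ≤ ENNReal.ofReal α := by rw [add_zero]; exact hlt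
  -- A ⊆ {πstar ≤ α}, hence {α < πstar} ⊆ Aᶜ
  have hsubπ : {x | α < πstar x} ⊆ Aᶜ := by
    intro x hx
    simp only [Set.mem_compl_iff, hAdef, Set.mem_setOf_eq, not_le]
    by_contra h
    push_neg at h
    have h1 : P {z | T x ≤ T z} ≤ ENNReal.ofReal α :=
      le_trans (hFanti c (T x) h) hPA_le
    have h2 : πstar x ≤ α := by
      rw [hπstar x]
      exact ENNReal.toReal_le_of_le_ofReal hα0.le h1
    exact absurd (hx : α < πstar x) (not_lt.mpr h2)
  -- the set B = {π ≤ α}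
  set B : Set 𝓧 := {x | π x ≤ α} with hBdef
  have hBm : MeasurableSet B := measurableSet_le hπm measurable_const
  have hPB : P B ≤ ENNReal.ofReal α := by
    have h1 := hπvalid α ⟨hα0, hα1⟩
    have h2 : P B ≠ ⊤ := measure_ne_top _ _
    rw [← ENNReal.ofReal_toReal h2]
    exact ENNReal.ofReal_le_ofReal h1
  have hPBA : P B ≤ P A := le_trans hPB hPA_ge
  -- Neyman–Pearson: Q B ≤ Q A
  set f' : 𝓧 → ℝ≥0∞ := fun x => ENNReal.ofReal (f x) with hf'def
  set g' : 𝓧 → ℝ≥0∞ := fun x => ENNReal.ofReal (g x) with hg'def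
  have hf'm : Measurable f' := hfm.ennreal_ofReal
  have hg'm : Measurable g' := hgm.ennreal_ofReal
  set k : ℝ≥0∞ := ENNReal.ofReal c with hkdef
  have hQB : Q B ≤ Q A := by
    have hpoint : ∀ x, B.indicator g' x + A.indicator (fun x => k * f' x) x ≤
        A.indicator g' x + B.indicator (fun x => k * f' x) x := by
      intro x
      by_cases hxA : x ∈ A <;> by_cases hxB : x ∈ B
      · simp [Set.indicator_of_mem hxA, Set.indicator_of_mem hxB]
      · -- x ∈ A, x ∉ B : need k * f' x ≤ g' x
        rw [Set.indicator_of_mem hxA, Set.indicator_of_mem hxA, Set.indicator_of_notMem hxB,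
          Set.indicator_of_notMem hxB, zero_add, add_zero]
        have hcf : c * f x ≤ g x := by
          have : c ≤ g x / f x := by rw [← hT x]; exact hxA
          exact (le_div_iff₀ (hfpos x)).mp this
        calc k * f' x = ENNReal.ofReal (c * f x) := by
              rw [hkdef, hf'def, ← ENNReal.ofReal_mul hc0]
          _ ≤ g' x := ENNReal.ofReal_le_ofReal hcf
      · -- x ∉ A, x ∈ B : need g' x ≤ k * f' x
        rw [Set.indicator_of_notMem hxA, Set.indicator_of_notMem hxA,
          Set.indicator_of_mem hxB, Set.indicator_of_mem hxB, zero_add, add_zero]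
        have hcf : g x ≤ c * f x := by
          have : g x / f x < c := by
            rw [← hT x]
            exact not_le.mp hxA
          exact ((div_lt_iff₀ (hfpos x)).mp this).le
        calc g' x ≤ ENNReal.ofReal (c * f x) := ENNReal.ofReal_le_ofReal hcf
          _ = k * f' x := by rw [hkdef, hf'def, ENNReal.ofReal_mul hc0]
      · simp [Set.indicator_of_notMem hxA, Set.indicator_of_notMem hxB]
    have hint : ∫⁻ x, (B.indicator g' x + A.indicator (fun x => k * f' x) x) ∂M ≤
        ∫⁻ x, (A.indicator g' x + B.indicator (fun x => k * f' x) x) ∂M :=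
      lintegral_mono hpoint
    have hQs : ∀ s : Set 𝓧, MeasurableSet s → ∫⁻ x, s.indicator g' x ∂M = Q s := by
      intro s hs
      rw [lintegral_indicator hs, hQ, withDensity_apply _ hs]
    have hPs : ∀ s : Set 𝓧, MeasurableSet s →
        ∫⁻ x, s.indicator (fun x => k * f' x) x ∂M = k * P s := by
      intro s hs
      rw [lintegral_indicator hs, hP, withDensity_apply _ hs,
        lintegral_const_mul _ hf'm]
    rw [lintegral_add_left (hg'm.indicator hBm), lintegral_add_left (hg'm.indicator hAm),
      hQs B hBm, hQs A hAm, hPs A hAm, hPs B hBm] at hint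
    have hkPA : Q B + k * P A ≤ Q A + k * P A :=
      le_trans hint (add_le_add_right (mul_le_mul_right hPBA k) _)
    exact (ENNReal.add_le_add_iff_right
      (ENNReal.mul_ne_top ENNReal.ofReal_ne_top (measure_ne_top _ _))).mp hkPA
  -- conclude
  have hfinal : Q {x | α < πstar x} ≤ Q {x | α < π x} := by
    have h1 : Q {x | α < πstar x} ≤ Q Aᶜ := measure_mono hsubπ
    have h2 : Q Aᶜ = 1 - Q A := by
      rw [measure_compl hAm (measure_ne_top _ _), measure_univ]
    have h3 : {x | α < π x} = Bᶜ := by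
      ext x
      simp [hBdef, not_le]
    have h4 : Q Bᶜ = 1 - Q B := by
      rw [measure_compl hBm (measure_ne_top _ _), measure_univ]
    rw [h3, h4]
    calc Q {x | α < πstar x} ≤ 1 - Q A := h1.trans h2.le
      _ ≤ 1 - Q B := tsub_le_tsub_left hQB 1
  exact ENNReal.toReal_mono (measure_ne_top _ _) hfinal
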